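/- Let M be a compact smooth manifold. Then every maximal ideal of the algebra C^∞(M,ℂ) is of the form I_x = {f ∈ C^∞(M,ℂ) | f(x) = 0} for a unique point x ∈ M, and conversely each I_x is a maximal ideal. -/

import Mathlib

open Bundle Manifold
open scoped TensorProduct

local notation "∞" => (⊤ : ℕ∞)

noncomputable section

/-- Complex multiplication and addition are smooth over `ℝ`, so that the complex-valued smooth
functions on a real manifold form a (comm)ring. -/
instance : ContMDiffRing 𝓘(ℝ, ℂ) (⊤ : ℕ∞) ℂ where
  contMDiff_add := by
    rw [contMDiff_iff]
    refine ⟨continuous_add, fun x y => ?_⟩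
    simp only [mfld_simps]
    exact contDiff_add.contDiffOn
  contMDiff_mul := by
    rw [contMDiff_iff]
    refine ⟨continuous_mul, fun x y => ?_⟩
    simp only [mfld_simps]
    exact contDiff_mul.contDiffOn

variable {EM : Type*} [NormedAddCommGroup EM] [NormedSpace ℝ EM] [FiniteDimensional ℝ EM]
  {HM : Type*} [TopologicalSpace HM] {IM : ModelWithCorners ℝ EM HM}
  {M : Type*} [TopologicalSpace M] [ChartedSpace HM M] [IsManifold IM (⊤ : ℕ∞) M]
  [T2Space M] [SecondCountableTopology M] [CompactSpace M]

/-- The constant functions make the smooth complex-valued functions a `ℂ`-algebra. -/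
instance : Algebra ℂ C^∞⟮IM, M; 𝓘(ℝ, ℂ), ℂ⟯ :=
  RingHom.toAlgebra
    { toFun := fun c => ⟨fun _ => c, contMDiff_const⟩
      map_one' := rfl
      map_mul' := fun _ _ => rfl
      map_zero' := rfl
      map_add' := fun _ _ => rfl }

/-- `I_x`, the ideal of smooth complex-valued functions vanishing at the point `x`. -/
def SmoothMap.idealOfPoint (x : M) : Ideal C^∞⟮IM, M; 𝓘(ℝ, ℂ), ℂ⟯ :=
  RingHom.ker (ContMDiffMap.evalRingHom x : C^∞⟮IM, M; 𝓘(ℝ, ℂ), ℂ⟯ →+* ℂ)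

/-- conjugation of a smooth complex function -/
def conjSm (f : C^∞⟮IM, M; 𝓘(ℝ, ℂ), ℂ⟯) : C^∞⟮IM, M; 𝓘(ℝ, ℂ), ℂ⟯ :=
  ⟨fun m => (starRingEnd ℂ) (f m),
    (Complex.conjCLE.contDiff.contMDiff).comp f.contMDiff⟩

set_option linter.unusedSectionVars false in
theorem idealOfPoint_isMaximal (x : M) : (SmoothMap.idealOfPoint (IM := IM) x).IsMaximal :=
  RingHom.ker_isMaximal_of_surjective _ fun c => ⟨⟨fun _ => c, contMDiff_const⟩, rfl⟩

set_option linter.unusedSectionVars false in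
theorem isUnit_of_ne_zero (g : C^∞⟮IM, M; 𝓘(ℝ, ℂ), ℂ⟯) (hg : ∀ m, g m ≠ 0) : IsUnit g := by
  refine IsUnit.of_mul_eq_one (a := g) ⟨fun m => (g m)⁻¹, fun m =>
    ((contDiffAt_inv ℝ (hg m)).contMDiffAt).comp m (g.contMDiff m)⟩ ?_
  ext m
  exact mul_inv_cancel₀ (hg m)

/-- The maximal ideals of the algebra of smooth complex-valued functions on a compact manifold
are exactly the ideals `I_x` of functions vanishing at a (unique) point `x`. -/
theorem maximal_ideals_eq_idealOfPoint :
    (∀ J : Ideal C^∞⟮IM, M; 𝓘(ℝ, ℂ), ℂ⟯, J.IsMaximal →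
      ∃! x : M, J = SmoothMap.idealOfPoint (IM := IM) x) ∧
    (∀ x : M, (SmoothMap.idealOfPoint (IM := IM) x).IsMaximal) := by
  constructor
  · intro J hJ
    -- first find a common zero of all elements of J
    have key : ∃ x : M, ∀ f ∈ J, f x = 0 := by
      by_contra h
      push_neg at h
      choose f hfJ hfx using h
      -- finite subcover of the sets where f x is nonzero
      obtain ⟨t, ht⟩ := isCompact_univ.elim_finite_subcover
        (fun x : M => {m | f x m ≠ 0})
        (fun x => isOpen_compl_singleton.preimage (map_continuous (f x)))
        (fun m _ => Set.mem_iUnion.2 ⟨m, hfx m⟩)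
      set g : C^∞⟮IM, M; 𝓘(ℝ, ℂ), ℂ⟯ := ∑ x ∈ t, conjSm (f x) * f x with hg
      have hgJ : g ∈ J := Ideal.sum_mem _ fun x _ => J.mul_mem_left _ (hfJ x)
      have hgne : ∀ m, g m ≠ 0 := by
        intro m
        obtain ⟨x, hxt, hxm⟩ := Set.mem_iUnion₂.1 (ht (Set.mem_univ m))
        have hval : g m = ((∑ x ∈ t, Complex.normSq (f x m) : ℝ) : ℂ) := by
          have : g m = ContMDiffMap.evalRingHom m g := rfl
          rw [this, hg, map_sum, Complex.ofReal_sum]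
          refine Finset.sum_congr rfl fun y _ => ?_
          rw [map_mul]
          show (starRingEnd ℂ) (f y m) * f y m = _
          rw [mul_comm, Complex.mul_conj]
        rw [hval]
        have hpos : 0 < ∑ x ∈ t, Complex.normSq (f x m) :=
          Finset.sum_pos' (fun y _ => Complex.normSq_nonneg _)
            ⟨x, hxt, Complex.normSq_pos.2 hxm⟩
        exact_mod_cast hpos.ne'
      exact hJ.ne_top (J.eq_top_of_isUnit_mem hgJ (isUnit_of_ne_zero g hgne))
    obtain ⟨x, hx⟩ := key
    have hle : J ≤ SmoothMap.idealOfPoint (IM := IM) x := fun f hf => hx f hf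
    have hJx : J = SmoothMap.idealOfPoint (IM := IM) x :=
      hJ.eq_of_le (idealOfPoint_isMaximal x).ne_top hle
    refine ⟨x, hJx, fun y hy => ?_⟩
    -- uniqueness
    by_contra hxy
    obtain ⟨f, hf0, hf1, -⟩ := exists_contMDiffMap_zero_one_of_isClosed IM (n := (⊤ : ℕ∞))
      (isClosed_singleton (x := y)) (isClosed_singleton (x := x))
      (Set.disjoint_singleton.2 hxy)
    set F : C^∞⟮IM, M; 𝓘(ℝ, ℂ), ℂ⟯ :=
      ⟨fun m => (f m : ℂ), (Complex.ofRealCLM.contDiff.contMDiff).comp f.contMDiff⟩ with hF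
    have hFy : F ∈ SmoothMap.idealOfPoint (IM := IM) y := by
      show (F y : ℂ) = 0
      show ((f y : ℝ) : ℂ) = 0
      simp [hF, hf0 (Set.mem_singleton y)]
    have hFx : F ∉ SmoothMap.idealOfPoint (IM := IM) x := by
      show ¬ (F x : ℂ) = 0
      show ¬ ((f x : ℝ) : ℂ) = 0
      simp [hF, hf1 (Set.mem_singleton x)]
    rw [hy] at hJx
    exact hFx (hJx ▸ hFy)
  · exact idealOfPoint_isMaximal

end
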